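/- Let k be a field, R = k[x,y], and b ∈ k with b ≠ −1. Then (x²+xy, x²−y², y³) = (x+y, y³) ∩ (x−by, y²). -/

import Mathlib

open MvPolynomial

private lemma mem_span_X_of_eval_zero {k : Type*} [Field k]
    (p : MvPolynomial (Fin 2) k) (h : eval (0 : Fin 2 → k) p = 0) :
    p ∈ Ideal.span {X 0, X 1} := by
  have hs : ({X 0, X 1} : Set (MvPolynomial (Fin 2) k)) = X '' Set.univ := by
    ext q; simp [Fin.exists_fin_two, eq_comm, or_comm]
  rw [hs, mem_ideal_span_X_image]
  intro m hm
  have hm0 : m ≠ 0 := by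
    rintro rfl
    exact mem_support_iff.mp hm (by have h' := h; simp [eval_zero] at h'; rwa [constantCoeff_eq] at h')
  obtain ⟨i, hi⟩ := Finsupp.ne_iff.mp hm0
  exact ⟨i, trivial, by simpa using hi⟩

theorem ideal_eq_inter_with_parameter
    {k : Type*} [Field k] (b : k) (hb : b ≠ -1) :
    (Ideal.span {(X 0 : MvPolynomial (Fin 2) k) ^ 2 + X 0 * X 1,
        (X 0 : MvPolynomial (Fin 2) k) ^ 2 - X 1 ^ 2,
        (X 1 : MvPolynomial (Fin 2) k) ^ 3} : Ideal (MvPolynomial (Fin 2) k)) =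
      Ideal.span {(X 0 : MvPolynomial (Fin 2) k) + X 1, X 1 ^ 3} ⊓
        Ideal.span {(X 0 : MvPolynomial (Fin 2) k) - C b * X 1, X 1 ^ 2} := by
  apply le_antisymm
  · rw [Ideal.span_le]
    rintro p hp
    simp only [Set.mem_insert_iff, Set.mem_singleton_iff] at hp
    rcases hp with rfl | rfl | rfl
    · constructor
      · exact Ideal.mem_span_pair.mpr ⟨X 0, 0, by ring⟩
      · exact Ideal.mem_span_pair.mpr
          ⟨X 0 + C (1 + b) * X 1, C ((1 + b) * b), by simp only [C_add, C_mul, C_1]; ring⟩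
    · constructor
      · exact Ideal.mem_span_pair.mpr ⟨X 0 - X 1, 0, by ring⟩
      · exact Ideal.mem_span_pair.mpr
          ⟨X 0 + C b * X 1, C (b * b - 1), by simp only [C_sub, C_mul, C_1]; ring⟩
    · constructor
      · exact Ideal.mem_span_pair.mpr ⟨0, 1, by ring⟩
      · exact Ideal.mem_span_pair.mpr ⟨0, X 1, by ring⟩
  · rintro f ⟨h1, h2⟩
    obtain ⟨A, B, hAB⟩ := Ideal.mem_span_pair.mp h1
    obtain ⟨Cp, D, hCD⟩ := Ideal.mem_span_pair.mp h2
    -- linear coefficients of f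
    have e1 : eval (0 : Fin 2 → k) (pderiv 0 f) = eval 0 A := by
      rw [← hAB]; simp [pderiv_mul]
    have e2 : eval (0 : Fin 2 → k) (pderiv 1 f) = eval 0 A := by
      rw [← hAB]; simp [pderiv_mul]
    have e3 : eval (0 : Fin 2 → k) (pderiv 0 f) = eval 0 Cp := by
      rw [← hCD]; simp [pderiv_mul]
    have e4 : eval (0 : Fin 2 → k) (pderiv 1 f) = -b * eval 0 Cp := by
      rw [← hCD]; simp [pderiv_mul]; ring
    have ha : eval (0 : Fin 2 → k) A = 0 := by
      have hac : eval (0 : Fin 2 → k) A = eval 0 Cp := e1.symm.trans e3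
      have hcc : eval (0 : Fin 2 → k) A = -b * eval 0 Cp := e2.symm.trans e4
      have h0 : (1 + b) * eval (0 : Fin 2 → k) A = 0 := by
        linear_combination hcc + b * hac
      rcases mul_eq_zero.mp h0 with h | h
      · exact absurd (by linear_combination h) hb
      · exact h
    have hA : A ∈ Ideal.span {(X 0 : MvPolynomial (Fin 2) k), X 1} :=
      mem_span_X_of_eval_zero A ha
    obtain ⟨P, Q, hPQ⟩ := Ideal.mem_span_pair.mp hA
    have hg1 : (X 0 : MvPolynomial (Fin 2) k) ^ 2 + X 0 * X 1 ∈
        Ideal.span {(X 0 : MvPolynomial (Fin 2) k) ^ 2 + X 0 * X 1,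
          (X 0 : MvPolynomial (Fin 2) k) ^ 2 - X 1 ^ 2, (X 1 : MvPolynomial (Fin 2) k) ^ 3} :=
      Ideal.subset_span (by simp)
    have hg2 : (X 0 : MvPolynomial (Fin 2) k) ^ 2 - X 1 ^ 2 ∈
        Ideal.span {(X 0 : MvPolynomial (Fin 2) k) ^ 2 + X 0 * X 1,
          (X 0 : MvPolynomial (Fin 2) k) ^ 2 - X 1 ^ 2, (X 1 : MvPolynomial (Fin 2) k) ^ 3} :=
      Ideal.subset_span (by simp)
    have hg3 : (X 1 : MvPolynomial (Fin 2) k) ^ 3 ∈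
        Ideal.span {(X 0 : MvPolynomial (Fin 2) k) ^ 2 + X 0 * X 1,
          (X 0 : MvPolynomial (Fin 2) k) ^ 2 - X 1 ^ 2, (X 1 : MvPolynomial (Fin 2) k) ^ 3} :=
      Ideal.subset_span (by simp)
    have hf : f = (P + Q) * ((X 0 : MvPolynomial (Fin 2) k) ^ 2 + X 0 * X 1)
        + (-Q) * ((X 0 : MvPolynomial (Fin 2) k) ^ 2 - X 1 ^ 2)
        + B * (X 1 : MvPolynomial (Fin 2) k) ^ 3 := by
      rw [← hAB, ← hPQ]; ring
    rw [hf]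
    exact add_mem (add_mem (Ideal.mul_mem_left _ _ hg1) (Ideal.mul_mem_left _ _ hg2))
      (Ideal.mul_mem_left _ _ hg3)
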